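/- Let n ∈ ℝ³ be a unit vector, r_n(x) = x − 2⟨n,x⟩n, and ρ ∈ ℝ. Let b_o : S² → ℝ^m be bounded measurable with all components odd (b_o(−x) = −b_o(x)) and b_e : S² → ℝ^k be bounded measurable with all components even (b_e(−x) = b_e(x)). Define for a unit vector ν the matrix H_e(ν) = ∫_{{x ∈ S² : ⟨ν,x⟩ < 0}} b_o(x) (b_e(x) − ρ b_e(r_ν(x)))ᵀ dσ(x). Then H_e(−n) = −H_e(n). -/
import Mathlib


open MeasureTheory Metric
open scoped RealInnerProductSpace Real Matrix Pointwise

noncomputable section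

/-- Euclidean space `ℝ³`. -/
abbrev E3 : Type := EuclideanSpace ℝ (Fin 3)

/-- The unit sphere `S² ⊆ ℝ³`. -/
abbrev S2 : Type := Metric.sphere (0 : E3) 1

/-- The rotation-invariant surface measure `σ` on `S²` (total mass `4π`). -/
noncomputable def σS : Measure S2 := (volume : Measure E3).toSphere

/-- The antipodal map on the sphere as a measurable equivalence. -/
def negS2equiv : S2 ≃ᵐ S2 where
  toFun x := -x
  invFun x := -x
  left_inv := neg_neg
  right_inv := neg_neg
  measurable_toFun := continuous_neg.measurable
  measurable_invFun := continuous_neg.measurable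

lemma negS2_measurePreserving : MeasurePreserving (fun x : S2 => -x) σS σS := by
  refine ⟨continuous_neg.measurable, ?_⟩
  ext s hs
  rw [Measure.map_apply continuous_neg.measurable hs]
  have hpre : (fun x : S2 => -x) ⁻¹' s = (fun x : S2 => -x) '' s := by
    ext x
    constructor
    · intro hx; exact ⟨-x, hx, neg_neg x⟩
    · rintro ⟨y, hy, rfl⟩; simpa using hy
  have hsp : MeasurableSet ((fun x : S2 => -x) ⁻¹' s) := hs.preimage continuous_neg.measurable
  have h1 : σS ((fun x : S2 => -x) ⁻¹' s)
      = Module.finrank ℝ E3 * volume (Set.Ioo (0:ℝ) 1 • (Subtype.val '' ((fun x : S2 => -x) ⁻¹' s))) :=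
    Measure.toSphere_apply' _ hsp
  have h2 : σS s = Module.finrank ℝ E3 * volume (Set.Ioo (0:ℝ) 1 • (Subtype.val '' s)) :=
    Measure.toSphere_apply' _ hs
  rw [show (σS ((fun x : S2 => -x) ⁻¹' s) = σS s) ↔ _ from iff_of_eq (congrArg₂ Eq h1 h2)]
  congr 1
  have himg : (Subtype.val '' ((fun x : S2 => -x) ⁻¹' s) : Set E3) = -(Subtype.val '' s) := by
    rw [hpre]
    ext x
    simp only [Set.mem_image, Set.mem_neg]
    constructor
    · rintro ⟨v, ⟨w, hw, rfl⟩, rfl⟩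
      exact ⟨w, hw, by simp⟩
    · rintro ⟨w, hw, hx⟩
      exact ⟨-w, ⟨w, hw, rfl⟩, by
        rw [show ((-w : S2) : E3) = -(w : E3) from rfl, hx, neg_neg]⟩
  rw [himg]
  have hsmul : (Set.Ioo (0:ℝ) 1 • (-(Subtype.val '' s)) : Set E3) =
      -(Set.Ioo (0:ℝ) 1 • (Subtype.val '' s)) := by
    ext x
    simp only [Set.mem_smul, Set.mem_neg]
    constructor
    · rintro ⟨r, hr, y, hy, rfl⟩
      exact ⟨r, hr, -y, hy, by simp⟩
    · rintro ⟨r, hr, y, hy, hx⟩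
      exact ⟨r, hr, -y, by simpa using hy, by rw [smul_neg, hx, neg_neg]⟩
  rw [hsmul]
  have hneg : (-(Set.Ioo (0:ℝ) 1 • (Subtype.val '' s)) : Set E3) =
      Neg.neg ⁻¹' (Set.Ioo (0:ℝ) 1 • (Subtype.val '' s)) := by
    ext x; simp [Set.mem_neg]
  rw [hneg]
  exact (Measure.measurePreserving_neg (volume : Measure E3)).measure_preimage_emb
    (Homeomorph.neg E3).measurableEmbedding _

/-- The reflection of a unit vector in a hyperplane through the origin is a unit vector. -/
lemma reflect_mem_sphere (n : E3) (hn : ‖n‖ = 1) (x : E3) (hx : ‖x‖ = 1) :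
    ‖x - (2 * ⟪n, x⟫) • n‖ = 1 := by
  have h : ⟪x - (2 * ⟪n, x⟫) • n, x - (2 * ⟪n, x⟫) • n⟫ = 1 := by
    have hxx : ⟪x, x⟫ = 1 := by
      rw [real_inner_self_eq_norm_sq, hx]; norm_num
    have hnn : ⟪n, n⟫ = 1 := by
      rw [real_inner_self_eq_norm_sq, hn]; norm_num
    have hc : ⟪x, n⟫ = ⟪n, x⟫ := real_inner_comm n x
    simp only [inner_sub_left, inner_sub_right, real_inner_smul_left, real_inner_smul_right,
      hxx, hnn, hc]
    ring
  have h2 : ‖x - (2 * ⟪n, x⟫) • n‖ ^ 2 = 1 := by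
    rw [← real_inner_self_eq_norm_sq, h]
  nlinarith [norm_nonneg (x - (2 * ⟪n, x⟫) • n)]

/-- Antisymmetry of the even Marshak boundary matrix: for `b_o : S² → ℝ^m` bounded measurable
with odd components, `b_e : S² → ℝ^k` bounded measurable with even components, and
`H_e(ν)_{ij} = ∫_{⟨ν,x⟩<0} b_o(x)_i (b_e(x) − ρ b_e(r_ν(x)))_j dσ(x)` (with
`r_ν(x) = x − 2⟨ν,x⟩ν`), one has `H_e(−n) = −H_e(n)` for every unit vector `n`. -/
theorem marshak_even_matrix_neg_normal {m k : ℕ} (n : E3) (hn : ‖n‖ = 1) (ρ : ℝ)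
    (bo : E3 → Fin m → ℝ) (be : E3 → Fin k → ℝ)
    (hbomeas : ∀ i, Measurable (fun x : S2 => bo (x : E3) i))
    (hbobd : ∃ C : ℝ, ∀ x ∈ Metric.sphere (0 : E3) 1, ∀ i, |bo x i| ≤ C)
    (hboodd : ∀ x ∈ Metric.sphere (0 : E3) 1, bo (-x) = -bo x)
    (hbemeas : ∀ j, Measurable (fun x : S2 => be (x : E3) j))
    (hbebd : ∃ C : ℝ, ∀ x ∈ Metric.sphere (0 : E3) 1, ∀ j, |be x j| ≤ C)
    (hbeeven : ∀ x ∈ Metric.sphere (0 : E3) 1, be (-x) = be x)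
    (He : E3 → Matrix (Fin m) (Fin k) ℝ)
    (hHe : ∀ ν : E3, ∀ i j, He ν i j = ∫ x in {x : S2 | ⟪ν, (x : E3)⟫ < 0},
      bo (x : E3) i * (be (x : E3) j - ρ * be ((x : E3) - (2 * ⟪ν, (x : E3)⟫) • ν) j) ∂σS) :
    He (-n) = -He n := by
  ext i j
  rw [Matrix.neg_apply, hHe, hHe]
  set g : S2 → ℝ := fun x =>
    bo (x : E3) i * (be (x : E3) j - ρ * be ((x : E3) - (2 * ⟪-n, (x : E3)⟫) • (-n)) j) with hg
  have hsub : ∫ x in {x : S2 | ⟪-n, (x : E3)⟫ < 0}, g x ∂σS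
      = ∫ x in (fun x : S2 => -x) ⁻¹' {x : S2 | ⟪-n, (x : E3)⟫ < 0}, g (-x) ∂σS :=
    (negS2_measurePreserving.setIntegral_preimage_emb
      negS2equiv.measurableEmbedding g _).symm
  have hset : (fun x : S2 => -x) ⁻¹' {x : S2 | ⟪-n, (x : E3)⟫ < 0}
      = {x : S2 | ⟪n, (x : E3)⟫ < 0} := by
    ext x
    simp only [Set.mem_preimage, Set.mem_setOf_eq]
    rw [show ((-x : S2) : E3) = -(x : E3) from rfl]
    rw [inner_neg_neg]
  rw [hsub, hset]
  rw [← integral_neg]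
  refine setIntegral_congr_fun ?_ ?_
  · have : Continuous fun x : S2 => ⟪n, (x : E3)⟫ :=
      (continuous_const.inner continuous_induced_dom)
    exact (isOpen_lt this continuous_const).measurableSet
  · intro x _
    have hxS : (x : E3) ∈ Metric.sphere (0 : E3) 1 := x.2
    have hxn : ‖(x : E3)‖ = 1 := by simpa using mem_sphere_zero_iff_norm.mp hxS
    have hcoe : ((-x : S2) : E3) = -(x : E3) := rfl
    have harg : (-(x : E3)) - (2 * ⟪-n, -(x : E3)⟫) • (-n)
        = -((x : E3) - (2 * ⟪n, (x : E3)⟫) • n) := by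
      rw [inner_neg_neg, smul_neg]
      abel
    have hrefl : ‖(x : E3) - (2 * ⟪n, (x : E3)⟫) • n‖ = 1 :=
      reflect_mem_sphere n hn _ hxn
    have hreflS : ((x : E3) - (2 * ⟪n, (x : E3)⟫) • n) ∈ Metric.sphere (0 : E3) 1 :=
      mem_sphere_zero_iff_norm.mpr hrefl
    have hodd := hboodd (x : E3) hxS
    have heven1 := hbeeven (x : E3) hxS
    have heven2 := hbeeven _ hreflS
    show g (-x) = -(bo (x : E3) i * (be (x : E3) j - ρ * be ((x : E3) - (2 * ⟪n, (x : E3)⟫) • n) j))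
    simp only [hg]
    rw [hcoe, harg, hodd, heven1, heven2]
    simp only [Pi.neg_apply]
    ring
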